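/- arXiv:2603.25014 — 3 statements merged into one kernel-verified Lean document; each statement's English description precedes it below -/
import Mathlib

section
/- The 3rd division polynomial of E: y² = x³ − 264u²x + 1694u³ factors as ψ₃(x) = 3(x² − 22ux + 132u²)(x² + 22ux − 176u²), and for nonzero rational u the two quadratic factors have discriminants −44u² and 1188u², neither of which is a rational square; hence E has no 3-torsion point with rational x-coordinate. -/
lemma aux_not_sq (m : ℕ) (h : ¬ IsSquare m) (q : ℚ) : q ^ 2 ≠ (m : ℚ) := by
  intro hq
  exact h (Rat.isSquare_natCast_iff.mp ⟨q, by rw [← hq]; ring⟩)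

lemma aux_no_r (m : ℕ) (h : ¬ IsSquare m) (u : ℚ) (hu : u ≠ 0) :
    ¬ ∃ r : ℚ, r ^ 2 = (m : ℚ) * u ^ 2 := by
  rintro ⟨r, hr⟩
  refine aux_not_sq m h (r / u) ?_
  field_simp
  linarith [hr]

lemma ns1188 : ¬ IsSquare (1188 : ℕ) := by
  rintro ⟨n, hn⟩
  have h1 : n ≤ 34 := by nlinarith
  have := Nat.mul_le_mul h1 h1
  omega

lemma ns297 : ¬ IsSquare (297 : ℕ) := by
  rintro ⟨n, hn⟩
  have h1 : n ≤ 17 := by nlinarith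
  have := Nat.mul_le_mul h1 h1
  omega

/-- The third division polynomial of `y² = x³ - 264u²x + 1694u³` factors as
`3(x² - 22ux + 132u²)(x² + 22ux - 176u²)`, the two quadratic factors have discriminants
`-44u²` and `1188u²`, neither of which is a rational square; hence ψ₃ has no rational root
(no 3-torsion point with rational x-coordinate). -/
theorem stmt_6 (u : ℚ) (hu : u ≠ 0) :
    (∀ x : ℚ, 3 * x ^ 4 + 6 * (-264 * u ^ 2) * x ^ 2 + 12 * (1694 * u ^ 3) * x
        - (-264 * u ^ 2) ^ 2
      = 3 * (x ^ 2 - 22 * u * x + 132 * u ^ 2) * (x ^ 2 + 22 * u * x - 176 * u ^ 2)) ∧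
    ((-22 * u) ^ 2 - 4 * (132 * u ^ 2) = -44 * u ^ 2) ∧
    ((22 * u) ^ 2 - 4 * (-176 * u ^ 2) = 1188 * u ^ 2) ∧
    (¬ ∃ r : ℚ, r ^ 2 = -44 * u ^ 2) ∧
    (¬ ∃ r : ℚ, r ^ 2 = 1188 * u ^ 2) ∧
    ∀ x : ℚ, 3 * x ^ 4 + 6 * (-264 * u ^ 2) * x ^ 2 + 12 * (1694 * u ^ 3) * x
        - (-264 * u ^ 2) ^ 2 ≠ 0 := by
  have hu2 : 0 < u ^ 2 := by positivity
  refine ⟨fun x => by ring, by ring, by ring, ?_, ?_, ?_⟩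
  · rintro ⟨r, hr⟩
    nlinarith [sq_nonneg r]
  · have := aux_no_r 1188 ns1188 u hu
    push_cast at this
    exact this
  · intro x hx
    have hfac : 3 * (x ^ 2 - 22 * u * x + 132 * u ^ 2) * (x ^ 2 + 22 * u * x - 176 * u ^ 2)
        = 0 := by linarith [hx, (by ring : 3 * x ^ 4 + 6 * (-264 * u ^ 2) * x ^ 2
          + 12 * (1694 * u ^ 3) * x - (-264 * u ^ 2) ^ 2
        = 3 * (x ^ 2 - 22 * u * x + 132 * u ^ 2) * (x ^ 2 + 22 * u * x - 176 * u ^ 2))]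
    have h1 : x ^ 2 - 22 * u * x + 132 * u ^ 2 > 0 := by nlinarith [sq_nonneg (x - 11 * u)]
    have h2 : x ^ 2 + 22 * u * x - 176 * u ^ 2 = 0 := by
      rcases mul_eq_zero.mp hfac with h | h
      · rcases mul_eq_zero.mp h with h | h
        · norm_num at h
        · linarith
      · exact h
    have := aux_no_r 297 ns297 u hu
    push_cast at this
    exact this ⟨x + 11 * u, by nlinarith⟩
end

section
/- Let u be a nonzero integer and p a prime of good reduction for E_u: y² = x³ − 9u²x + 12u³ such that 3 is a cubic residue modulo p, i.e., 3 ≡ m³ (mod p) for some integer m. Then (−mu − m²u, 0) is a 2-torsion point of E_u over 𝔽_p; in particular #E_u(𝔽_p) is even. -/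
lemma sqcard {p : ℕ} [Fact p.Prime] (hp2 : p ≠ 2) (a : ZMod p) :
    Fintype.card {y : ZMod p // y ^ 2 = a} % 2 = if a = 0 then 1 else 0 := by
  have hchar : ringChar (ZMod p) ≠ 2 := by
    rw [ZMod.ringChar_zmod_n]; exact hp2
  by_cases ha : a = 0
  · rw [if_pos ha]
    have : Fintype.card {y : ZMod p // y ^ 2 = a} = 1 := by
      rw [Fintype.card_congr (Equiv.subtypeEquivRight (q := fun y => y = 0)
        (fun y => by simp [ha, pow_eq_zero_iff]))]
      exact Fintype.card_subtype_eq 0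
    simp [this]
  · rw [if_neg ha]
    have hc := quadraticChar_card_sqrts hchar a
    have hcard : ({x : ZMod p | x ^ 2 = a}.toFinset.card : ℤ)
        = Fintype.card {y : ZMod p // y ^ 2 = a} := by
      rw [Set.toFinset_card]; rfl
    rw [hcard] at hc
    rcases quadraticChar_dichotomy ha with h | h <;> rw [h] at hc <;> omega

/-- If `3 ≡ m³ (mod p)` for a good prime `p` of `E_u : y² = x³ - 9u²x + 12u³`, then
`(-mu - m²u, 0)` is a 2-torsion point of `E_u` over `𝔽_p`; in particular `#E_u(𝔽_p)` is even. -/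
theorem stmt_16 (u : ℤ) (hu : u ≠ 0) (p : ℕ) (hp : p.Prime)
    (hgood : ¬ ((p : ℤ) ∣ -(2 ^ 6 * 3 ^ 5) * u ^ 6))
    (m : ℤ) (hm : (3 : ZMod p) = (m : ZMod p) ^ 3) :
    ((-(m * u) - m ^ 2 * u : ℤ) : ZMod p) ^ 3
        - 9 * (u : ZMod p) ^ 2 * ((-(m * u) - m ^ 2 * u : ℤ) : ZMod p)
        + 12 * (u : ZMod p) ^ 3 = 0 ∧
    Even (1 + Nat.card {xy : ZMod p × ZMod p //
      xy.2 ^ 2 = xy.1 ^ 3 - 9 * (u : ZMod p) ^ 2 * xy.1 + 12 * (u : ZMod p) ^ 3}) := by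
  haveI : Fact p.Prime := ⟨hp⟩
  set M : ZMod p := (m : ZMod p) with hM
  set U : ZMod p := (u : ZMod p) with hUdef
  -- basic nonvanishing
  have hp2 : p ≠ 2 := by
    rintro rfl
    exact hgood ⟨-(2 ^ 5 * 3 ^ 5) * u ^ 6, by push_cast; ring⟩
  have hall : ((-(2 ^ 6 * 3 ^ 5) * u ^ 6 : ℤ) : ZMod p) ≠ 0 := by
    intro h
    exact hgood ((ZMod.intCast_zmod_eq_zero_iff_dvd _ p).mp h)
  have h2 : (2 : ZMod p) ≠ 0 := by
    intro h; apply hall; push_cast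
    linear_combination (-7776 * (u : ZMod p) ^ 6) * h
  have h3 : (3 : ZMod p) ≠ 0 := by
    intro h; apply hall; push_cast
    linear_combination (-5184 * (u : ZMod p) ^ 6) * h
  have hU : U ≠ 0 := by
    intro h; apply hall; push_cast
    linear_combination (-15552 * (u : ZMod p) ^ 5) * h
  have h864 : (864 : ZMod p) ≠ 0 := by
    intro h; apply hall; push_cast
    linear_combination (-18 * (u : ZMod p) ^ 6) * h
  -- quadratic non-vanishing facts
  have hA : M ^ 2 + 3 * M - 6 ≠ 0 := by
    intro hq0
    have h15 : (15 : ZMod p) * M = 21 := by linear_combination -hm - (M - 3) * hq0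
    have : (864 : ZMod p) = 0 := by
      linear_combination (225 * M ^ 2 + 315 * M + 441) * h15 + 3375 * hm
    exact h864 this
  have hB : M ^ 2 + 3 * M + 3 ≠ 0 := by
    intro hq0
    have h6 : (6 : ZMod p) * M = -6 := by linear_combination -hm - (M - 3) * hq0
    have : (864 : ZMod p) = 0 := by
      linear_combination (36 * M ^ 2 - 36 * M + 36) * h6 + 216 * hm
    exact h864 this
  -- the root
  set x₀ : ZMod p := -(M * U) - M ^ 2 * U with hx₀
  have hcast : ((-(m * u) - m ^ 2 * u : ℤ) : ZMod p) = x₀ := by push_cast; rw [hx₀]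
  have hroot : x₀ ^ 3 - 9 * U ^ 2 * x₀ + 12 * U ^ 3 = 0 := by
    rw [hx₀]
    linear_combination (U ^ 3 * (M ^ 3 + 3 * M ^ 2 + 3 * M + 4)) * hm
  refine ⟨by rw [hcast]; exact hroot, ?_⟩
  -- counting
  set f : ZMod p → ZMod p := fun x => x ^ 3 - 9 * U ^ 2 * x + 12 * U ^ 3 with hf
  set q : ZMod p → ZMod p := fun x => x ^ 2 + x₀ * x + (x₀ ^ 2 - 9 * U ^ 2) with hq
  have hfactor : ∀ x, f x = (x - x₀) * q x := by
    intro x; rw [hf, hq]; simp only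
    linear_combination hroot
  have hqx₀ : q x₀ ≠ 0 := by
    intro h
    apply hB
    have h3U : (3 : ZMod p) * U ^ 2 ≠ 0 := mul_ne_zero h3 (pow_ne_zero 2 hU)
    apply (mul_right_cancel₀ h3U ?_)
    rw [zero_mul]
    rw [hq, hx₀] at h; simp only at h
    linear_combination h + (3 * U ^ 2 * (M + 2)) * hm
  set D : ZMod p := 36 * U ^ 2 - 3 * x₀ ^ 2 with hD
  have hDne : D ≠ 0 := by
    intro h
    apply hA
    have h3U : (-3 : ZMod p) * U ^ 2 ≠ 0 :=
      mul_ne_zero (neg_ne_zero.mpr h3) (pow_ne_zero 2 hU)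
    apply (mul_right_cancel₀ h3U ?_)
    rw [zero_mul]
    rw [hD, hx₀] at h
    linear_combination h - (3 * U ^ 2 * (M + 2)) * hm
  -- the sets
  classical
  set R : Finset (ZMod p) := Finset.univ.filter (fun x => f x = 0) with hR
  set Q : Finset (ZMod p) := Finset.univ.filter (fun x => q x = 0) with hQ
  have hqiff : ∀ x : ZMod p, q x = 0 ↔ (2 * x + x₀) ^ 2 = D := by
    intro x
    constructor
    · intro h; rw [hD]; rw [hq] at h; simp only at h
      linear_combination 4 * h
    · intro h
      have h4 : (4 : ZMod p) ≠ 0 := by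
        intro h4
        exact mul_ne_zero h2 h2 (by rw [show (2:ZMod p)*2 = 4 by norm_num, h4])
      apply mul_left_cancel₀ h4
      rw [mul_zero, hq]; simp only
      rw [hD] at h
      linear_combination h
  -- card of Q is even
  have hQcard : Q.card % 2 = 0 := by
    have hbij : Q.card = (Finset.univ.filter (fun y : ZMod p => y ^ 2 = D)).card := by
      apply Finset.card_bij' (fun x _ => 2 * x + x₀) (fun y _ => (y - x₀) / 2)
      · intro x hx
        simp only [hQ, Finset.mem_filter, Finset.mem_univ, true_and] at hx ⊢
        exact (hqiff x).mp hx
      · intro y hy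
        simp only [hQ, Finset.mem_filter, Finset.mem_univ, true_and] at hy ⊢
        rw [hqiff]
        have : 2 * ((y - x₀) / 2) + x₀ = y := by field_simp; ring
        rw [this]; exact hy
      · intro x hx; field_simp; ring
      · intro y hy; field_simp; ring
    rw [hbij]
    have := sqcard hp2 D
    rw [if_neg hDne] at this
    rw [← this]
    congr 1
    rw [Fintype.card_subtype]
  have hx₀Q : x₀ ∉ Q := by
    simp only [hQ, Finset.mem_filter, Finset.mem_univ, true_and]
    exact hqx₀
  have hRins : R = insert x₀ Q := by
    ext x
    simp only [hR, hQ, Finset.mem_filter, Finset.mem_univ, true_and, Finset.mem_insert]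
    rw [hfactor x, mul_eq_zero, sub_eq_zero]
  have hRcard : R.card % 2 = 1 := by
    rw [hRins, Finset.card_insert_of_notMem hx₀Q]
    omega
  -- total count
  have e : {xy : ZMod p × ZMod p //
      xy.2 ^ 2 = xy.1 ^ 3 - 9 * U ^ 2 * xy.1 + 12 * U ^ 3}
      ≃ Σ x : ZMod p, {y : ZMod p // y ^ 2 = f x} :=
    { toFun := fun s => ⟨s.1.1, s.1.2, s.2⟩
      invFun := fun s => ⟨(s.1, s.2.1), s.2.2⟩
      left_inv := fun s => rfl
      right_inv := fun s => rfl }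
  have hcount : Nat.card {xy : ZMod p × ZMod p //
      xy.2 ^ 2 = xy.1 ^ 3 - 9 * U ^ 2 * xy.1 + 12 * U ^ 3}
      = ∑ x : ZMod p, Fintype.card {y : ZMod p // y ^ 2 = f x} := by
    rw [Nat.card_eq_fintype_card, Fintype.card_congr e, Fintype.card_sigma]
  have hsum : (∑ x : ZMod p, Fintype.card {y : ZMod p // y ^ 2 = f x}) % 2 = 1 := by
    rw [Finset.sum_nat_mod,
      Finset.sum_congr rfl (fun x _ => sqcard hp2 (f x)), ← Finset.card_filter]
    rw [← hR] at *
    omega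
  rw [hcount, Nat.even_iff]
  omega
end

section
/- Over a field F of characteristic not 2 or 3 in which 3 is not a cube, the quartic f(x) = x⁴ − 18v x² + 48v^{3/2}·x − 27v² cannot factor as a product of two quadratics of the form (x² − Ax + B)(x² + Ax + C) with A ≠ 0. More precisely: for the polynomial f(x) = x⁴ − 18u²x² + 48u³x − 27u⁴ over 𝔽_p with u ≠ 0 and p a prime such that 3 is not a cubic residue mod p, if f = (x² − Ax + B)(x² + Ax + C) with A, B, C ∈ 𝔽_p and A ≠ 0, then setting a = A² and v = u², the relation ((a − 12v)/(4v))³ = 9 holds, which forces ((a−12v)²/(3·(4v)²))³ = 3, contradicting the assumption on p. -/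
open Polynomial

/-- Over `𝔽_p` with `3` not a cubic residue and `u ≠ 0`, the quartic
`x⁴ - 18u²x² + 48u³x - 27u⁴` cannot factor as `(x² - Ax + B)(x² + Ax + C)` with `A ≠ 0`:
such a factorization would force (with `a = A²`, `v = u²`) `((a - 12v)/(4v))³ = 9`, hence
`((a - 12v)²/(3(4v)²))³ = 3`, contradicting the assumption on `p`. -/
theorem stmt_18 (p : ℕ) [Fact p.Prime]
    (hcube : ¬ ∃ m : ZMod p, m ^ 3 = 3)
    (u : ZMod p) (hu : u ≠ 0) (A B C : ZMod p) (hA : A ≠ 0)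
    (hf : (X ^ 4 - Polynomial.C (18 * u ^ 2) * X ^ 2 + Polynomial.C (48 * u ^ 3) * X
          - Polynomial.C (27 * u ^ 4) : Polynomial (ZMod p))
        = (X ^ 2 - Polynomial.C A * X + Polynomial.C B)
          * (X ^ 2 + Polynomial.C A * X + Polynomial.C C)) :
    ((A ^ 2 - 12 * u ^ 2) / (4 * u ^ 2)) ^ 3 = 9 ∧
    ((A ^ 2 - 12 * u ^ 2) ^ 2 / (3 * (4 * u ^ 2) ^ 2)) ^ 3 = 3 ∧
    False := by
  have h3 : (3 : ZMod p) ≠ 0 := fun h => hcube ⟨0, by linear_combination -h⟩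
  have h2 : (2 : ZMod p) ≠ 0 := fun h => hcube ⟨1, by linear_combination -h⟩
  -- extract coefficients
  have e2 := congrArg (fun q : Polynomial (ZMod p) => q.coeff 2) hf
  have e1 := congrArg (fun q : Polynomial (ZMod p) => q.coeff 1) hf
  have e0 := congrArg (fun q : Polynomial (ZMod p) => q.coeff 0) hf
  simp only [coeff_sub, coeff_add, coeff_mul_X, coeff_C_mul, coeff_X_pow, coeff_C] at e2 e1 e0
  -- expand products
  have hexp : ∀ k : ℕ, ((X ^ 2 - Polynomial.C A * X + Polynomial.C B)
          * (X ^ 2 + Polynomial.C A * X + Polynomial.C C) : Polynomial (ZMod p)).coeff k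
        = (X ^ 4 + Polynomial.C (B + C - A ^ 2) * X ^ 2 + Polynomial.C (A * (B - C)) * X
            + Polynomial.C (B * C) : Polynomial (ZMod p)).coeff k := by
    intro k
    congr 1
    simp only [map_add, map_sub, map_mul, map_pow]
    ring
  rw [hexp 2] at e2
  rw [hexp 1] at e1
  rw [hexp 0] at e0
  simp only [coeff_add, coeff_C_mul, coeff_mul_X, coeff_X_pow, coeff_C, coeff_X] at e2 e1 e0
  norm_num at e2 e1 e0
  -- e2 : -(18*u^2) = B + C - A^2 (roughly), e1 : 48*u^3 = A*(B-C), e0 : -(27*u^4) = B*C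
  have hv : (4 * u ^ 2 : ZMod p) ≠ 0 := by
    intro h
    have h4 : (4 : ZMod p) ≠ 0 := by
      intro h4
      exact h2 (by have : (2:ZMod p)^2 = 0 := by linear_combination h4
                   exact pow_eq_zero_iff (n := 2) (by norm_num) |>.mp this)
    exact hu (by
      have := mul_eq_zero.mp h
      rcases this with h'|h'
      · exact absurd h' h4
      · exact pow_eq_zero_iff (n := 2) (by norm_num) |>.mp h')
  have key : (A ^ 2 - 12 * u ^ 2) ^ 3 = 9 * (4 * u ^ 2) ^ 3 := by
    have hmain : A ^ 2 * (A ^ 2 - 18 * u ^ 2) ^ 2 + 108 * u ^ 4 * A ^ 2 - 2304 * u ^ 6 = 0 := by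
      linear_combination A^2*(A^2 - 18*u^2 + B + C)*e2 - (A*(B-C)+48*u^3)*e1 - 4*A^2*e0
    linear_combination hmain
  have g1 : ((A ^ 2 - 12 * u ^ 2) / (4 * u ^ 2)) ^ 3 = 9 := by
    rw [div_pow, key, mul_div_assoc, div_self (pow_ne_zero _ hv), mul_one]
  have g2 : ((A ^ 2 - 12 * u ^ 2) ^ 2 / (3 * (4 * u ^ 2) ^ 2)) ^ 3 = 3 := by
    rw [div_pow, ← pow_mul]
    rw [show 2*3 = 3*2 by ring, pow_mul, key]
    rw [mul_pow, mul_pow, ← pow_mul, show 3*2 = 2*3 by ring, pow_mul]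
    rw [show ((9:ZMod p)^2 = 3 * 3^3) by norm_num]
    field_simp
    ring
    exact inv_mul_cancel₀ (left_ne_zero_of_mul hv)
  exact ⟨g1, g2, hcube ⟨(A ^ 2 - 12 * u ^ 2) ^ 2 / (3 * (4 * u ^ 2) ^ 2), g2⟩⟩
end
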